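/- arXiv:math/0509322 — 3 statements merged into one kernel-verified Lean document; each statement's English description precedes it below -/
import Mathlib

section
/- For the generating function F_2(t,x,y) = sum over binary trees T of t^{|T|} (sum_{v in T} x^{l(v)}) (sum_{v in T} y^{l(v)}), where l(v) is the natural label (right steps minus left steps on the path from root to v), one has F_2(t, e^{iu}, e^{-iu}) = B(1+B)(1+2B-B^2) / ((1-B)(1+B-2B cos u)^2), where B = B(t) satisfies B = t(1+B)^2. -/
open Complex

/-- Binary trees: empty, or a root with a left and a right subtree. -/
inductive BinTree where
  | nil : BinTree
  | node : BinTree → BinTree → BinTree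

/-- Number of nodes. -/
def BinTree.size : BinTree → ℕ
  | .nil => 0
  | .node l r => l.size + r.size + 1

/-- `∑_{v ∈ T} x^{ℓ(v)}` for the natural labelling of a binary tree (root labelled 0,
left child one less, right child one more than its parent). -/
noncomputable def BinTree.labelSum : BinTree → ℂ → ℂ
  | .nil, _ => 0
  | .node l r, x => 1 + x⁻¹ * l.labelSum x + x * r.labelSum x

/-- The nonempty-binary-tree generating function `B(t) = (1-2t-√(1-4t))/(2t)`. -/
noncomputable def Bfun (t : ℝ) : ℝ := (1 - 2*t - Real.sqrt (1 - 4*t)) / (2*t)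

namespace BinTree

/-- conversion to Mathlib's `Tree Unit` -/
def toT : BinTree → Tree Unit
  | .nil => .nil
  | .node l r => .node () (toT l) (toT r)

lemma toT_injective : Function.Injective toT := by
  intro a
  induction a with
  | nil => intro b h; cases b <;> simp [toT] at h ⊢
  | node l r ihl ihr =>
    intro b h
    cases b with
    | nil => simp [toT] at h
    | node l' r' =>
      simp only [toT, BinaryTree.node.injEq] at h
      rw [ihl h.2.1, ihr h.2.2]

lemma numNodes_toT (T : BinTree) : (toT T).numNodes = T.size := by
  induction T with
  | nil => rfl
  | node l r ihl ihr => simp [toT, Tree.numNodes, size, ihl, ihr]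

lemma catalan_le_four_pow (n : ℕ) : catalan n ≤ 4 ^ n := by
  have h1 : catalan n ≤ n.centralBinom := by
    rw [catalan_eq_centralBinom_div]; exact Nat.div_le_self _ _
  refine h1.trans ?_
  have h2 : n.centralBinom ≤ ∑ m ∈ Finset.range (2*n + 1), (2*n).choose m := by
    exact Finset.single_le_sum (f := fun m => (2*n).choose m)
      (fun i _ => Nat.zero_le _) (by simp [Nat.lt_succ_iff]; omega)
  rw [Nat.sum_range_choose] at h2
  calc n.centralBinom ≤ 2 ^ (2*n) := h2
    _ = 4 ^ n := by rw [pow_mul]; norm_num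

/-- the number of binary trees of a given size within any finite set is at most `4^n` -/
lemma card_filter_size_le (s : Finset BinTree) (n : ℕ) [DecidableEq BinTree] :
    (s.filter (fun T => T.size = n)).card ≤ 4 ^ n := by
  have : (s.filter (fun T => T.size = n)).card
      = ((s.filter (fun T => T.size = n)).image toT).card := by
    rw [Finset.card_image_of_injective _ toT_injective]
  rw [this]
  have hsub : (s.filter (fun T => T.size = n)).image toT ⊆ BinaryTree.treesOfNumNodesEq n := by
    intro x hx
    simp only [Finset.mem_image, Finset.mem_filter] at hx
    obtain ⟨T, ⟨_, hTn⟩, rfl⟩ := hx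
    rw [BinaryTree.mem_treesOfNumNodesEq]; exact (numNodes_toT T).trans hTn
  refine (Finset.card_le_card hsub).trans ?_
  rw [BinaryTree.treesOfNumNodesEq_card_eq_catalan]
  exact catalan_le_four_pow n

/-- master summability: `∑_T c(size T)` is summable whenever `∑ 4^n c n` is. -/
lemma summable_of_size {c : ℕ → ℝ} (hc0 : ∀ n, 0 ≤ c n)
    (hc : Summable (fun n => (4:ℝ)^n * c n)) :
    Summable (fun T : BinTree => c T.size) := by
  classical
  refine summable_of_sum_le (c := ∑' n, (4:ℝ)^n * c n) (fun T => hc0 _) ?_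
  intro s
  have hmap : ∀ T ∈ s, T.size ∈ Finset.range (s.sup size + 1) := by
    intro T hT
    simp only [Finset.mem_range, Nat.lt_succ_iff]
    exact Finset.le_sup hT
  rw [← Finset.sum_fiberwise_of_maps_to hmap (fun T => c T.size)]
  have hstep : ∀ n ∈ Finset.range (s.sup size + 1),
      ∑ T ∈ s.filter (fun T => T.size = n), c T.size ≤ (4:ℝ)^n * c n := by
    intro n _
    have : ∑ T ∈ s.filter (fun T => T.size = n), c T.size
        = ∑ T ∈ s.filter (fun T => T.size = n), c n := by
      refine Finset.sum_congr rfl (fun T hT => ?_)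
      rw [(Finset.mem_filter.mp hT).2]
    rw [this, Finset.sum_const, nsmul_eq_mul]
    refine mul_le_mul_of_nonneg_right ?_ (hc0 n)
    calc ((s.filter (fun T => T.size = n)).card : ℝ)
        ≤ ((4:ℕ)^n : ℝ) := by exact_mod_cast card_filter_size_le s n
      _ = (4:ℝ)^n := by push_cast; ring
  refine (Finset.sum_le_sum hstep).trans ?_
  exact Summable.sum_le_tsum _ (fun n _ => mul_nonneg (by positivity) (hc0 n)) hc

lemma node_injective : Function.Injective (fun p : BinTree × BinTree => node p.1 p.2) := by
  rintro ⟨a, b⟩ ⟨c, d⟩ h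
  simp only [node.injEq] at h
  simp [Prod.ext_iff, h.1, h.2]

lemma tsum_node (φ : BinTree → ℂ) (hφ : Summable φ) :
    ∑' T, φ T = φ nil + ∑' p : BinTree × BinTree, φ (node p.1 p.2) := by
  classical
  rw [Summable.tsum_eq_add_tsum_ite hφ nil]
  congr 1
  have h1 : ∀ p : BinTree × BinTree,
      φ (node p.1 p.2) = (fun T => if T = nil then 0 else φ T) (node p.1 p.2) := by
    intro p; simp
  rw [tsum_congr h1]
  refine (Function.Injective.tsum_eq node_injective
    (f := fun T => if T = nil then 0 else φ T) ?_).symm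
  intro T hT
  rcases T with _ | ⟨l, r⟩
  · simp [Function.mem_support] at hT
  · exact ⟨(l, r), rfl⟩

lemma tsum_pair_mul (c : ℂ) (φ ψ : BinTree → ℂ) (hφ : Summable fun T => ‖φ T‖)
    (hψ : Summable fun T => ‖ψ T‖) :
    ∑' p : BinTree × BinTree, c * (φ p.1 * ψ p.2) = c * ((∑' T, φ T) * (∑' T, ψ T)) := by
  rw [tsum_mul_left, tsum_mul_tsum_of_summable_norm hφ hψ]

lemma hasSum_pair_mul (c : ℂ) (φ ψ : BinTree → ℂ) (hφ : Summable fun T => ‖φ T‖)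
    (hψ : Summable fun T => ‖ψ T‖) :
    HasSum (fun p : BinTree × BinTree => c * (φ p.1 * ψ p.2))
      (c * ((∑' T, φ T) * (∑' T, ψ T))) := by
  have h := ((summable_mul_of_summable_norm hφ hψ).mul_left c).hasSum
  rwa [tsum_pair_mul c φ ψ hφ hψ] at h

lemma norm_labelSum_le {z : ℂ} (hz : ‖z‖ = 1) (T : BinTree) :
    ‖T.labelSum z‖ ≤ T.size := by
  induction T with
  | nil => simp [labelSum]
  | node l r ihl ihr =>
    have hz' : ‖z⁻¹‖ = 1 := by rw [norm_inv, hz]; norm_num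
    calc ‖(node l r).labelSum z‖
        ≤ ‖(1:ℂ) + z⁻¹ * l.labelSum z‖ + ‖z * r.labelSum z‖ := norm_add_le _ _
      _ ≤ (‖(1:ℂ)‖ + ‖z⁻¹ * l.labelSum z‖) + ‖z * r.labelSum z‖ := by
          gcongr; exact norm_add_le _ _
      _ = 1 + ‖l.labelSum z‖ + ‖r.labelSum z‖ := by
          rw [norm_mul, norm_mul, hz, hz', norm_one]; ring
      _ ≤ 1 + l.size + r.size := by gcongr
      _ = ((node l r).size : ℝ) := by simp [size]; push_cast; ring

open Classical in
noncomputable def treesLt : ℕ → Finset BinTree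
  | 0 => ∅
  | (N+1) => insert nil (((treesLt N) ×ˢ (treesLt N)).image (fun p => node p.1 p.2))

lemma mem_treesLt : ∀ (T : BinTree) (N : ℕ), T.size < N → T ∈ treesLt N := by
  classical
  intro T
  induction T with
  | nil =>
    rintro (_ | N) h
    · omega
    · simp [treesLt]
  | node l r ihl ihr =>
    rintro (_ | N) h
    · omega
    · simp only [treesLt, Finset.mem_insert, Finset.mem_image]
      right
      refine ⟨(l, r), ?_, rfl⟩
      rw [Finset.mem_product]
      simp only [size] at h
      exact ⟨ihl N (by omega), ihr N (by omega)⟩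

lemma sum_treesLt_le {t B : ℝ} (ht0 : 0 < t) (hB0 : 0 ≤ B) (hB : B = t*(1+B)^2) :
    ∀ N, ∑ T ∈ treesLt N, t ^ T.size ≤ 1 + B := by
  classical
  intro N
  induction N with
  | zero => simp [treesLt]; nlinarith
  | succ N ih =>
    have hnil : nil ∉ ((treesLt N) ×ˢ (treesLt N)).image (fun p : BinTree × BinTree => node p.1 p.2) := by
      simp only [Finset.mem_image]
      rintro ⟨p, -, h⟩
      exact BinTree.noConfusion h
    rw [treesLt, Finset.sum_insert hnil]
    have hinj : ∀ x ∈ (treesLt N) ×ˢ (treesLt N), ∀ y ∈ (treesLt N) ×ˢ (treesLt N),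
        (fun p : BinTree × BinTree => node p.1 p.2) x = (fun p : BinTree × BinTree => node p.1 p.2) y → x = y := by
      rintro ⟨a,b⟩ - ⟨c,d⟩ - h
      simp only [node.injEq] at h
      simp [Prod.ext_iff, h.1, h.2]
    rw [Finset.sum_image hinj]
    have hprod : ∑ p ∈ (treesLt N) ×ˢ (treesLt N), t ^ (node p.1 p.2).size
        = t * ((∑ T ∈ treesLt N, t ^ T.size) * (∑ T ∈ treesLt N, t ^ T.size)) := by
      rw [Finset.sum_product]
      have hterm : ∀ l r : BinTree, t ^ (node l r).size = t * (t ^ l.size * t ^ r.size) := by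
        intro l r; simp only [size, pow_add, pow_succ]; ring
      simp_rw [hterm, ← Finset.mul_sum]
      simp_rw [← Finset.sum_mul]
    rw [hprod]
    have hQ0 : 0 ≤ ∑ T ∈ treesLt N, t ^ T.size :=
      Finset.sum_nonneg (fun T _ => le_of_lt (pow_pos ht0 _))
    have hsize : t ^ (nil).size = 1 := by simp [size]
    rw [hsize]
    have h2 : (∑ T ∈ treesLt N, t ^ T.size) * (∑ T ∈ treesLt N, t ^ T.size)
        ≤ (1+B)*(1+B) := mul_le_mul ih ih hQ0 (by linarith)
    nlinarith [h2]

lemma tsum_size_le {t B : ℝ} (ht0 : 0 < t) (hB0 : 0 ≤ B) (hB : B = t*(1+B)^2)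
    (hsum : Summable (fun T : BinTree => t ^ T.size)) :
    ∑' T : BinTree, t ^ T.size ≤ 1 + B := by
  refine Summable.tsum_le_of_sum_le hsum (fun s => ?_)
  have hsub : s ⊆ treesLt (s.sup size + 1) := by
    intro T hT
    exact mem_treesLt T _ (Nat.lt_succ_of_le (Finset.le_sup hT))
  refine le_trans (Finset.sum_le_sum_of_subset_of_nonneg hsub
    (fun T _ _ => le_of_lt (pow_pos ht0 _))) (sum_treesLt_le ht0 hB0 hB _)


lemma summable_pair_mul (c : ℂ) (φ ψ : BinTree → ℂ) (hφ : Summable fun T => ‖φ T‖)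
    (hψ : Summable fun T => ‖ψ T‖) :
    Summable (fun p : BinTree × BinTree => c * (φ p.1 * ψ p.2)) :=
  (summable_mul_of_summable_norm hφ hψ).mul_left c

end BinTree


lemma algebra_final (β c t G F : ℂ)
    (hβ : β = t*(1+β)^2)
    (hG : G*(1 - t*c*(1+β)) = t*((1+β)*(1+β)))
    (hF : F*(1 - 2*t*(1+β)) = t*((1+β)*(1+β)) + t*c*((1+β)*G) + t*c*((1+β)*G)
      + t*(c^2-2)*(G*G))
    (h1 : (1:ℂ)+β ≠ 0) (h2 : 1+β-β*c ≠ 0) (h3 : (1:ℂ)-β ≠ 0) :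
    F = β*(1+β)*(1+2*β-β^2)/((1-β)*(1+β-β*c)^2) := by
  have hGD : G*(1+β-β*c) = β*(1+β) := by
    apply mul_left_cancel₀ h1
    linear_combination ((1+β)^2)*hG + (-(1+β)*c*G - (1+β)^2)*hβ
  have hF2 : F*((1+β)*(1-β)) = β*(1+β)^2 + 2*c*β*((1+β)*G) + (c^2-2)*β*(G*G) := by
    linear_combination ((1+β)^2)*hF
      + (-2*(1+β)*F - (1+β)^2 - 2*c*(1+β)*G - (c^2-2)*(G*G))*hβ
  rw [eq_div_iff (mul_ne_zero h3 (pow_ne_zero 2 h2))]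
  apply mul_left_cancel₀ h1
  linear_combination ((1+β-β*c)^2)*hF2
    + (2*c*β*(1+β)*(1+β-β*c) + (c^2-2)*β*(G*(1+β-β*c) + β*(1+β)))*hGD


open BinTree

set_option maxHeartbeats 2000000

/-- The specialization `F₂(t, e^{iu}, e^{-iu})` of the two-variable label generating
function of binary trees equals `B(1+B)(1+2B-B²)/((1-B)(1+B-2B cos u)²)` where
`B = B(t)` satisfies `B = t(1+B)²`. -/
theorem F2_binary_specialization (t u : ℝ) (ht0 : 0 < t) (ht : t < 1/4) :
    (Bfun t : ℂ) = t * (1 + (Bfun t : ℂ))^2 ∧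
    (∑' T : BinTree, (t : ℂ)^T.size
        * T.labelSum (Complex.exp (Complex.I * u))
        * T.labelSum (Complex.exp (-Complex.I * u)))
      = (Bfun t : ℂ) * (1 + (Bfun t : ℂ)) * (1 + 2*(Bfun t : ℂ) - (Bfun t : ℂ)^2) /
        ((1 - (Bfun t : ℂ)) * (1 + (Bfun t : ℂ) - 2*(Bfun t : ℂ) * Real.cos u)^2) := by
  -- real facts
  have hs4 : (0:ℝ) < 1 - 4*t := by linarith
  set s := Real.sqrt (1 - 4*t) with hs_def
  have hs2 : s^2 = 1 - 4*t := Real.sq_sqrt (le_of_lt hs4)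
  have hs0 : 0 < s := Real.sqrt_pos.mpr hs4
  have hs1 : s < 1 := by nlinarith
  set B := Bfun t with hB_def
  have ht2 : (2*t) ≠ 0 := by positivity
  have hB : B = t*(1+B)^2 := by
    rw [hB_def, Bfun, ← hs_def]; field_simp; ring_nf; nlinarith [hs2]
  have hfac : (1-2*t-s)*(1-2*t+s) = 4*t^2 := by linear_combination -hs2
  have hnum : 0 < 1 - 2*t - s := by nlinarith [hfac]
  have hB0 : 0 < B := by rw [hB_def, Bfun, ← hs_def]; positivity
  have hB1 : B < 1 := by
    rw [hB_def, Bfun, ← hs_def, div_lt_one (by linarith)]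
    nlinarith [hs2]
  have h2t : 2*t*(1+B) = 1 - s := by
    rw [hB_def, Bfun, ← hs_def]; field_simp; ring
  have hBc : (B:ℂ) = (t:ℂ)*(1+(B:ℂ))^2 := by exact_mod_cast hB
  refine ⟨hBc, ?_⟩
  -- complex setup
  set x := Complex.exp (Complex.I * (u:ℂ)) with hx_def
  set y := Complex.exp (-Complex.I * (u:ℂ)) with hy_def
  have hxy : x * y = 1 := by
    rw [hx_def, hy_def, ← Complex.exp_add,
      show Complex.I*(u:ℂ) + -Complex.I*(u:ℂ) = 0 by ring, Complex.exp_zero]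
  have hxinv : x⁻¹ = y := inv_eq_of_mul_eq_one_right hxy
  have hyinv : y⁻¹ = x := inv_eq_of_mul_eq_one_right (by rw [mul_comm]; exact hxy)
  have hnx : ‖x‖ = 1 := by
    rw [hx_def, Complex.norm_exp]; simp
  have hny : ‖y‖ = 1 := by
    rw [hy_def, Complex.norm_exp]; simp
  set cC : ℂ := 2*((Real.cos u : ℝ) : ℂ) with hcC_def
  have hc : x + y = cC := by
    rw [hx_def, hy_def, show Complex.I*(u:ℂ) = (u:ℂ)*Complex.I from mul_comm _ _,
      show -Complex.I*(u:ℂ) = -(u:ℂ)*Complex.I by ring, ← Complex.two_cos, hcC_def,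
      ← Complex.ofReal_cos]
  -- summability
  have hw : Summable (fun T : BinTree => t^T.size * ((T.size:ℝ)+1)^2) := by
    apply summable_of_size (c := fun n => t^n * ((n:ℝ)+1)^2)
      (fun n => mul_nonneg (pow_nonneg ht0.le n) (sq_nonneg _))
    have hr : ‖4*t‖ < 1 := by
      rw [Real.norm_eq_abs, abs_of_pos (by linarith)]; linarith
    have h1 := summable_pow_mul_geometric_of_norm_lt_one (R := ℝ) 2 hr
    have h2 := summable_pow_mul_geometric_of_norm_lt_one (R := ℝ) 1 hr
    have h3 := summable_geometric_of_norm_lt_one (x := (4*t:ℝ)) hr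
    refine Summable.congr ((h1.add (h2.mul_left 2)).add h3) (fun n => ?_)
    simp only [mul_pow, pow_one]
    ring
  set aC : BinTree → ℂ := fun T => (t:ℂ)^T.size with haC_def
  set g1 : BinTree → ℂ := fun T => (t:ℂ)^T.size * T.labelSum x with hg1_def
  set g2 : BinTree → ℂ := fun T => (t:ℂ)^T.size * T.labelSum y with hg2_def
  set fC : BinTree → ℂ := fun T => (t:ℂ)^T.size * T.labelSum x * T.labelSum y with hfC_def
  have hnormpow : ∀ T : BinTree, ‖((t:ℂ))^T.size‖ = t^T.size := by
    intro T
    rw [norm_pow, Complex.norm_real, Real.norm_eq_abs, abs_of_pos ht0]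
  have hsq1 : ∀ n : ℕ, (1:ℝ) ≤ ((n:ℝ)+1)^2 := by
    intro n; nlinarith [Nat.cast_nonneg (α := ℝ) n]
  have hsqn : ∀ n : ℕ, (n:ℝ) ≤ ((n:ℝ)+1)^2 := by
    intro n; nlinarith [Nat.cast_nonneg (α := ℝ) n]
  have hsqnn : ∀ n : ℕ, (n:ℝ)*(n:ℝ) ≤ ((n:ℝ)+1)^2 := by
    intro n; nlinarith [Nat.cast_nonneg (α := ℝ) n]
  have htn : ∀ n : ℕ, (0:ℝ) ≤ t^n := fun n => pow_nonneg ht0.le n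
  have Na : Summable (fun T => ‖aC T‖) := by
    refine Summable.of_nonneg_of_le (fun T => norm_nonneg _) (fun T => ?_) hw
    rw [haC_def, hnormpow]
    nlinarith [hsq1 T.size, htn T.size]
  have N1 : Summable (fun T => ‖g1 T‖) := by
    refine Summable.of_nonneg_of_le (fun T => norm_nonneg _) (fun T => ?_) hw
    rw [hg1_def]
    simp only [norm_mul, hnormpow]
    have h := norm_labelSum_le hnx T
    nlinarith [htn T.size, hsqn T.size, norm_nonneg (T.labelSum x)]
  have N2 : Summable (fun T => ‖g2 T‖) := by
    refine Summable.of_nonneg_of_le (fun T => norm_nonneg _) (fun T => ?_) hw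
    rw [hg2_def]
    simp only [norm_mul, hnormpow]
    have h := norm_labelSum_le hny T
    nlinarith [htn T.size, hsqn T.size, norm_nonneg (T.labelSum y)]
  have Nf : Summable (fun T => ‖fC T‖) := by
    refine Summable.of_nonneg_of_le (fun T => norm_nonneg _) (fun T => ?_) hw
    rw [hfC_def]
    simp only [norm_mul, hnormpow]
    have h1 := norm_labelSum_le hnx T
    have h2 := norm_labelSum_le hny T
    have h3 : ‖T.labelSum x‖ * ‖T.labelSum y‖ ≤ (T.size:ℝ)*(T.size:ℝ) :=
      mul_le_mul h1 h2 (norm_nonneg _) (Nat.cast_nonneg _)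
    nlinarith [htn T.size, hsqnn T.size, norm_nonneg (T.labelSum x),
      norm_nonneg (T.labelSum y), h3]
  have Sa : Summable aC := Na.of_norm
  have S1 : Summable g1 := N1.of_norm
  have S2 : Summable g2 := N2.of_norm
  have Sf : Summable fC := Nf.of_norm
  -- functional equation for A
  have hsplitA : ∀ p : BinTree × BinTree,
      aC (node p.1 p.2) = (t:ℂ) * (aC p.1 * aC p.2) := by
    intro p; rw [haC_def]; simp only [size, pow_add, pow_succ]; ring
  have hA : (∑' T, aC T) = 1 + (t:ℂ)*((∑' T, aC T)*(∑' T, aC T)) := by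
    conv_lhs => rw [tsum_node aC Sa]
    rw [tsum_congr hsplitA, tsum_pair_mul (t:ℂ) aC aC Na Na]
    have h0 : aC BinTree.nil = 1 := by simp [haC_def, size]
    rw [h0]
  -- functional equation for G1
  have hsplit1 : ∀ p : BinTree × BinTree,
      g1 (node p.1 p.2) = (t:ℂ)*(aC p.1*aC p.2) + ((t:ℂ)*y)*(g1 p.1*aC p.2)
        + ((t:ℂ)*x)*(aC p.1*g1 p.2) := by
    intro p
    rw [hg1_def, haC_def]
    simp only [size, labelSum, pow_add, pow_succ]
    rw [hxinv]; ring
  have hG1 : (∑' T, g1 T) = (t:ℂ)*((∑' T, aC T)*(∑' T, aC T))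
      + ((t:ℂ)*y)*((∑' T, g1 T)*(∑' T, aC T))
      + ((t:ℂ)*x)*((∑' T, aC T)*(∑' T, g1 T)) := by
    conv_lhs => rw [tsum_node g1 S1]
    rw [tsum_congr hsplit1]
    rw [Summable.tsum_add ((summable_pair_mul ((t:ℂ)) aC aC Na Na).add
        (summable_pair_mul ((t:ℂ)*y) g1 aC N1 Na))
      (summable_pair_mul ((t:ℂ)*x) aC g1 Na N1)]
    rw [Summable.tsum_add (summable_pair_mul ((t:ℂ)) aC aC Na Na)
      (summable_pair_mul ((t:ℂ)*y) g1 aC N1 Na)]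
    rw [tsum_pair_mul (t:ℂ) aC aC Na Na, tsum_pair_mul ((t:ℂ)*y) g1 aC N1 Na,
      tsum_pair_mul ((t:ℂ)*x) aC g1 Na N1]
    have h0 : g1 BinTree.nil = 0 := by simp [hg1_def, labelSum]
    rw [h0]; ring
  -- functional equation for G2
  have hsplit2 : ∀ p : BinTree × BinTree,
      g2 (node p.1 p.2) = (t:ℂ)*(aC p.1*aC p.2) + ((t:ℂ)*x)*(g2 p.1*aC p.2)
        + ((t:ℂ)*y)*(aC p.1*g2 p.2) := by
    intro p
    rw [hg2_def, haC_def]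
    simp only [size, labelSum, pow_add, pow_succ]
    rw [hyinv]; ring
  have hG2 : (∑' T, g2 T) = (t:ℂ)*((∑' T, aC T)*(∑' T, aC T))
      + ((t:ℂ)*x)*((∑' T, g2 T)*(∑' T, aC T))
      + ((t:ℂ)*y)*((∑' T, aC T)*(∑' T, g2 T)) := by
    conv_lhs => rw [tsum_node g2 S2]
    rw [tsum_congr hsplit2]
    rw [Summable.tsum_add ((summable_pair_mul ((t:ℂ)) aC aC Na Na).add
        (summable_pair_mul ((t:ℂ)*x) g2 aC N2 Na))
      (summable_pair_mul ((t:ℂ)*y) aC g2 Na N2)]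
    rw [Summable.tsum_add (summable_pair_mul ((t:ℂ)) aC aC Na Na)
      (summable_pair_mul ((t:ℂ)*x) g2 aC N2 Na)]
    rw [tsum_pair_mul (t:ℂ) aC aC Na Na, tsum_pair_mul ((t:ℂ)*x) g2 aC N2 Na,
      tsum_pair_mul ((t:ℂ)*y) aC g2 Na N2]
    have h0 : g2 BinTree.nil = 0 := by simp [hg2_def, labelSum]
    rw [h0]; ring
  -- functional equation for F
  have hsplitF : ∀ p : BinTree × BinTree,
      fC (node p.1 p.2) = (t:ℂ)*(aC p.1*aC p.2) + ((t:ℂ)*x)*(g2 p.1*aC p.2)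
        + ((t:ℂ)*y)*(aC p.1*g2 p.2) + ((t:ℂ)*y)*(g1 p.1*aC p.2)
        + ((t:ℂ)*(x*y))*(fC p.1*aC p.2) + ((t:ℂ)*y^2)*(g1 p.1*g2 p.2)
        + ((t:ℂ)*x)*(aC p.1*g1 p.2) + ((t:ℂ)*x^2)*(g2 p.1*g1 p.2)
        + ((t:ℂ)*(x*y))*(aC p.1*fC p.2) := by
    intro p
    rw [hfC_def, hg1_def, hg2_def, haC_def]
    simp only [size, labelSum, pow_add, pow_succ]
    rw [hxinv, hyinv]; ring
  have hF : (∑' T, fC T) = (t:ℂ)*((∑' T, aC T)*(∑' T, aC T))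
      + ((t:ℂ)*x)*((∑' T, g2 T)*(∑' T, aC T))
      + ((t:ℂ)*y)*((∑' T, aC T)*(∑' T, g2 T))
      + ((t:ℂ)*y)*((∑' T, g1 T)*(∑' T, aC T))
      + ((t:ℂ)*(x*y))*((∑' T, fC T)*(∑' T, aC T))
      + ((t:ℂ)*y^2)*((∑' T, g1 T)*(∑' T, g2 T))
      + ((t:ℂ)*x)*((∑' T, aC T)*(∑' T, g1 T))
      + ((t:ℂ)*x^2)*((∑' T, g2 T)*(∑' T, g1 T))
      + ((t:ℂ)*(x*y))*((∑' T, aC T)*(∑' T, fC T)) := by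
    have s1 := summable_pair_mul ((t:ℂ)) aC aC Na Na
    have s2 := summable_pair_mul ((t:ℂ)*x) g2 aC N2 Na
    have s3 := summable_pair_mul ((t:ℂ)*y) aC g2 Na N2
    have s4 := summable_pair_mul ((t:ℂ)*y) g1 aC N1 Na
    have s5 := summable_pair_mul ((t:ℂ)*(x*y)) fC aC Nf Na
    have s6 := summable_pair_mul ((t:ℂ)*y^2) g1 g2 N1 N2
    have s7 := summable_pair_mul ((t:ℂ)*x) aC g1 Na N1
    have s8 := summable_pair_mul ((t:ℂ)*x^2) g2 g1 N2 N1
    have s9 := summable_pair_mul ((t:ℂ)*(x*y)) aC fC Na Nf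
    conv_lhs => rw [tsum_node fC Sf]
    rw [tsum_congr hsplitF]
    rw [Summable.tsum_add ((((((((s1.add s2).add s3).add s4).add s5).add s6).add s7).add s8)) s9,
      Summable.tsum_add (((((((s1.add s2).add s3).add s4).add s5).add s6).add s7)) s8,
      Summable.tsum_add ((((((s1.add s2).add s3).add s4).add s5).add s6)) s7,
      Summable.tsum_add (((((s1.add s2).add s3).add s4).add s5)) s6,
      Summable.tsum_add ((((s1.add s2).add s3).add s4)) s5,
      Summable.tsum_add (((s1.add s2).add s3)) s4,
      Summable.tsum_add ((s1.add s2)) s3,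
      Summable.tsum_add s1 s2]
    rw [tsum_pair_mul (t:ℂ) aC aC Na Na, tsum_pair_mul ((t:ℂ)*x) g2 aC N2 Na,
      tsum_pair_mul ((t:ℂ)*y) aC g2 Na N2, tsum_pair_mul ((t:ℂ)*y) g1 aC N1 Na,
      tsum_pair_mul ((t:ℂ)*(x*y)) fC aC Nf Na, tsum_pair_mul ((t:ℂ)*y^2) g1 g2 N1 N2,
      tsum_pair_mul ((t:ℂ)*x) aC g1 Na N1, tsum_pair_mul ((t:ℂ)*x^2) g2 g1 N2 N1,
      tsum_pair_mul ((t:ℂ)*(x*y)) aC fC Na Nf]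
    have h0 : fC BinTree.nil = 0 := by simp [hfC_def, labelSum]
    rw [h0]; ring
  -- identify A with 1 + B
  have hArsum : Summable (fun T : BinTree => t^T.size) := Summable.congr Na
    (fun T => by rw [haC_def, hnormpow])
  have hAcast : (∑' T, aC T) = (((∑' T : BinTree, t^T.size : ℝ)):ℂ) := by
    rw [Complex.ofReal_tsum]
    exact tsum_congr (fun T => by rw [haC_def, Complex.ofReal_pow])
  have hAreq : (∑' T : BinTree, t^T.size) = 1 + t*((∑' T : BinTree, t^T.size)
      *(∑' T : BinTree, t^T.size)) := by
    have := hA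
    rw [hAcast] at this
    exact_mod_cast this
  have hArle : (∑' T : BinTree, t^T.size) ≤ 1 + B :=
    tsum_size_le ht0 hB0.le hB hArsum
  have hArB : (∑' T : BinTree, t^T.size) = 1 + B := by
    set Ar := (∑' T : BinTree, t^T.size) with hAr_def
    have hfac2 : (Ar - (1+B)) * (t*(Ar + (1+B)) - 1) = 0 := by
      linear_combination hB - hAreq
    rcases mul_eq_zero.mp hfac2 with h | h
    · linarith
    · exfalso
      have h1 : t*Ar ≤ t*(1+B) := mul_le_mul_of_nonneg_left hArle ht0.le
      nlinarith [h2t, hs0]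
  have hAval : (∑' T, aC T) = 1 + (B:ℂ) := by
    rw [hAcast, hArB]; push_cast; ring
  -- nonvanishing facts
  have hcosle : Real.cos u ≤ 1 := Real.cos_le_one u
  have hcosge : -1 ≤ Real.cos u := Real.neg_one_le_cos u
  have hdpos : (0:ℝ) < 1 + B - B*(2*Real.cos u) := by nlinarith
  have hDne : (1:ℂ)+(B:ℂ)-(B:ℂ)*cC ≠ 0 := by
    rw [hcC_def]
    have : ((1 + B - B*(2*Real.cos u) : ℝ) : ℂ) ≠ 0 :=
      Complex.ofReal_ne_zero.mpr (ne_of_gt hdpos)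
    convert this using 1
    push_cast; ring
  have h1Bne : (1:ℂ)+(B:ℂ) ≠ 0 := by
    have : ((1 + B : ℝ) : ℂ) ≠ 0 := Complex.ofReal_ne_zero.mpr (by linarith)
    convert this using 1
    push_cast; ring
  have h1mBne : (1:ℂ)-(B:ℂ) ≠ 0 := by
    have : ((1 - B : ℝ) : ℂ) ≠ 0 := Complex.ofReal_ne_zero.mpr (by linarith)
    convert this using 1
    push_cast; ring
  have hddpos : (0:ℝ) < 1 - t*(2*Real.cos u)*(1+B) := by nlinarith [h2t, hs0]
  have hddne : (1:ℂ) - (t:ℂ)*cC*(1+(B:ℂ)) ≠ 0 := by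
    rw [hcC_def]
    have : ((1 - t*(2*Real.cos u)*(1+B) : ℝ) : ℂ) ≠ 0 :=
      Complex.ofReal_ne_zero.mpr (ne_of_gt hddpos)
    convert this using 1
    push_cast; ring
  -- reduce the G equations
  rw [hAval] at hG1 hG2 hF
  have hG1v : (∑' T, g1 T)*(1 - (t:ℂ)*cC*(1+(B:ℂ))) = (t:ℂ)*((1+(B:ℂ))*(1+(B:ℂ))) := by
    linear_combination hG1 + ((t:ℂ)*(1+(B:ℂ))*(∑' T, g1 T))*hc
  have hG2v : (∑' T, g2 T)*(1 - (t:ℂ)*cC*(1+(B:ℂ))) = (t:ℂ)*((1+(B:ℂ))*(1+(B:ℂ))) := by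
    linear_combination hG2 + ((t:ℂ)*(1+(B:ℂ))*(∑' T, g2 T))*hc
  have hG21 : (∑' T, g2 T) = (∑' T, g1 T) :=
    mul_right_cancel₀ hddne (hG2v.trans hG1v.symm)
  rw [hG21] at hF
  have hFin : (∑' T, fC T)*(1 - 2*(t:ℂ)*(1+(B:ℂ)))
      = (t:ℂ)*((1+(B:ℂ))*(1+(B:ℂ))) + (t:ℂ)*cC*((1+(B:ℂ))*(∑' T, g1 T))
        + (t:ℂ)*cC*((1+(B:ℂ))*(∑' T, g1 T))
        + (t:ℂ)*(cC^2-2)*((∑' T, g1 T)*(∑' T, g1 T)) := by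
    linear_combination hF
      + (2*(t:ℂ)*(1+(B:ℂ))*(∑' T, fC T) - 2*(t:ℂ)*((∑' T, g1 T)*(∑' T, g1 T)))*hxy
      + (2*(t:ℂ)*(1+(B:ℂ))*(∑' T, g1 T) + (t:ℂ)*((∑' T, g1 T)*(∑' T, g1 T))*(x+y+cC))*hc
  have hfinal := algebra_final (B:ℂ) cC (t:ℂ) (∑' T, g1 T) (∑' T, fC T)
    hBc hG1v hFin h1Bne hDne h1mBne
  rw [hfinal]
  have : (1:ℂ)+(B:ℂ)-(B:ℂ)*cC = 1+(B:ℂ)-2*(B:ℂ)*((Real.cos u : ℝ):ℂ) := by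
    rw [hcC_def]; ring
  rw [this]
end

section
/- The generating function F_1(t,x) = sum over binary trees T of t^{|T|} sum_{v in T} x^{l(v)} satisfies F_1(x) = t F_0^2 + t(x + 1/x) F_0 F_1(x), and hence F_1(x) = B(1+B)/(1 + B(1 - x - 1/x)), where F_0 = 1 + B and B = t(1+B)^2. -/
open Complex

deriving instance DecidableEq for BinTree

def BinTree.depth : BinTree → ℕ
  | .nil => 0
  | .node l r => max l.depth r.depth + 1

def treesUpTo : ℕ → Finset BinTree
  | 0 => {BinTree.nil}
  | d+1 => insert BinTree.nil
      ((treesUpTo d ×ˢ treesUpTo d).image fun p => BinTree.node p.1 p.2)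

lemma mem_treesUpTo : ∀ (T : BinTree) (d : ℕ), T.depth ≤ d → T ∈ treesUpTo d := by
  intro T
  induction T with
  | nil => intro d _; cases d <;> simp [treesUpTo]
  | node l r ihl ihr =>
    intro d hd
    cases d with
    | zero => simp [BinTree.depth] at hd
    | succ d =>
      have h : max l.depth r.depth ≤ d := by
        simpa [BinTree.depth, Nat.succ_le_succ_iff] using hd
      simp only [treesUpTo, Finset.mem_insert, Finset.mem_image]
      right
      exact ⟨(l, r), by
        simp [Finset.mem_product, ihl d (le_trans (le_max_left _ _) h),
          ihr d (le_trans (le_max_right _ _) h)], rfl⟩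

lemma node_inj : Function.Injective (fun p : BinTree × BinTree => BinTree.node p.1 p.2) := by
  intro p q h
  simp only [BinTree.node.injEq] at h
  exact Prod.ext h.1 h.2

lemma sum_treesUpTo_succ (u : ℝ) (d : ℕ) :
    ∑ T ∈ treesUpTo (d+1), u ^ T.size
      = 1 + u * (∑ T ∈ treesUpTo d, u ^ T.size)^2 := by
  rw [treesUpTo, Finset.sum_insert (by simp)]
  rw [Finset.sum_image (fun p _ q _ h => node_inj h)]
  have : ∑ p ∈ treesUpTo d ×ˢ treesUpTo d, u ^ (BinTree.node p.1 p.2).size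
      = ∑ p ∈ treesUpTo d ×ˢ treesUpTo d, u * (u ^ p.1.size * u ^ p.2.size) := by
    apply Finset.sum_congr rfl
    intro p _
    simp [BinTree.size, pow_add, pow_succ]
    ring
  rw [this, ← Finset.mul_sum]
  congr 1
  rw [sq, Finset.sum_mul_sum, ← Finset.sum_product']

lemma sum_treesUpTo_le {u : ℝ} (hu0 : 0 ≤ u) (hu : u ≤ 1/4) (d : ℕ) :
    ∑ T ∈ treesUpTo d, u ^ T.size ≤ 2 := by
  induction d with
  | zero => simp [treesUpTo, BinTree.size]
  | succ d ih =>
    rw [sum_treesUpTo_succ]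
    have h0 : 0 ≤ ∑ T ∈ treesUpTo d, u ^ T.size :=
      Finset.sum_nonneg fun T _ => pow_nonneg hu0 _
    nlinarith

lemma summable_pow_size {u : ℝ} (hu0 : 0 ≤ u) (hu : u ≤ 1/4) :
    Summable (fun T : BinTree => u ^ T.size) := by
  apply summable_of_sum_le (c := 2) (fun T => pow_nonneg hu0 _)
  intro s
  calc ∑ T ∈ s, u ^ T.size
      ≤ ∑ T ∈ treesUpTo (s.sup BinTree.depth), u ^ T.size := by
        apply Finset.sum_le_sum_of_subset_of_nonneg
        · intro T hT; exact mem_treesUpTo T _ (Finset.le_sup hT)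
        · intros; exact pow_nonneg hu0 _
    _ ≤ 2 := sum_treesUpTo_le hu0 hu _

lemma hasSum_nodes {M : Type*} [AddCommMonoid M] [TopologicalSpace M]
    {f : BinTree → M} {a : M} (h0 : f BinTree.nil = 0) :
    HasSum (fun p : BinTree × BinTree => f (BinTree.node p.1 p.2)) a ↔ HasSum f a := by
  refine node_inj.hasSum_iff ?_
  intro T hT
  cases T with
  | nil => exact h0
  | node l r => exact absurd ⟨(l, r), rfl⟩ hT

lemma Bfun_id {t : ℝ} (ht0 : 0 < t) (ht : t < 1/4) : Bfun t = t * (1 + Bfun t)^2 := by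
  have hq2 : Real.sqrt (1-4*t)^2 = 1-4*t := Real.sq_sqrt (by linarith)
  unfold Bfun
  field_simp
  have hq2' : Real.sqrt (1 - t*4)^2 = 1 - 4*t := by
    rw [show (1:ℝ) - t*4 = 1 - 4*t by ring]; exact hq2
  linear_combination (-1) * hq2'

lemma Bfun_pos {t : ℝ} (ht0 : 0 < t) (ht : t < 1/4) : 0 < Bfun t := by
  have hq2 : Real.sqrt (1-4*t)^2 = 1-4*t := Real.sq_sqrt (by linarith)
  have hq0 : 0 ≤ Real.sqrt (1-4*t) := Real.sqrt_nonneg _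
  apply div_pos _ (by linarith)
  nlinarith

set_option maxHeartbeats 1000000 in
lemma hasSum_pow_size {t : ℝ} (ht0 : 0 < t) (ht : t < 1/4) :
    HasSum (fun T : BinTree => t ^ T.size) (1 + Bfun t) := by
  have hsum := summable_pow_size ht0.le ht.le
  have hS := hsum.hasSum
  set S := ∑' T : BinTree, t ^ T.size with hSdef
  have hSle : S ≤ 2 := by
    refine hasSum_le_of_sum_le hS ?_
    intro s
    calc ∑ T ∈ s, t ^ T.size
        ≤ ∑ T ∈ treesUpTo (s.sup BinTree.depth), t ^ T.size := by
          apply Finset.sum_le_sum_of_subset_of_nonneg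
          · intro T hT; exact mem_treesUpTo T _ (Finset.le_sup hT)
          · intros; exact pow_nonneg ht0.le _
      _ ≤ 2 := sum_treesUpTo_le ht0.le ht.le _
  have hnorm : Summable (fun T : BinTree => ‖t ^ T.size‖) := by
    simpa [Real.norm_eq_abs, abs_pow, _root_.abs_of_nonneg ht0.le] using hsum
  have hmul : Summable (fun p : BinTree × BinTree => t ^ p.1.size * t ^ p.2.size) :=
    summable_mul_of_summable_norm hnorm hnorm
  have htsum : S * S = ∑' p : BinTree × BinTree, t ^ p.1.size * t ^ p.2.size :=
    Summable.tsum_mul_tsum hsum hsum hmul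
  have hpair : HasSum (fun p : BinTree × BinTree => t ^ p.1.size * t ^ p.2.size) (S * S) :=
    htsum ▸ hmul.hasSum
  have hpair' : HasSum (fun p : BinTree × BinTree => t ^ (BinTree.node p.1 p.2).size)
      (t * (S * S)) := by
    refine (hpair.mul_left t).congr_fun ?_
    intro p
    simp only [BinTree.size, pow_add, pow_succ]
    ring
  have hoff : HasSum (fun T : BinTree => if T = BinTree.nil then 0 else t ^ T.size)
      (t * (S * S)) := by
    rw [← hasSum_nodes (by simp)]
    exact hpair'.congr_fun (fun p => by simp)
  have hnil : HasSum (fun T : BinTree => if T = BinTree.nil then (1:ℝ) else 0) 1 :=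
    hasSum_ite_eq _ _
  have hS' : HasSum (fun T : BinTree => t ^ T.size) (t * (S * S) + 1) := by
    refine (hoff.add hnil).congr_fun ?_
    intro T
    cases T <;> simp [BinTree.size]
  have hSval : S = t * (S * S) + 1 := hS.unique hS'
  have hq2 : Real.sqrt (1-4*t)^2 = 1-4*t := Real.sq_sqrt (by linarith)
  have hq0 : 0 ≤ Real.sqrt (1-4*t) := Real.sqrt_nonneg _
  set q := Real.sqrt (1-4*t)
  have hfac : (2*t*S - 1 - q) * (2*t*S - 1 + q) = 0 := by nlinarith
  have hcase : 2*t*S - 1 + q = 0 := by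
    rcases mul_eq_zero.mp hfac with h | h
    · nlinarith
    · exact h
  have hBS : 1 + Bfun t = S := by
    unfold Bfun
    field_simp
    have hq' : Real.sqrt (1 - t*4) = q := by
      rw [show (1:ℝ) - t*4 = 1 - 4*t by ring]
    linarith [hq']
  rw [hBS]
  exact hS


set_option maxHeartbeats 1000000 in
/-- The one-variable label generating function `F₁(t,x) = ∑_T t^{|T|} ∑_{v∈T} x^{ℓ(v)}`
of binary trees satisfies `F₁ = t F₀² + t(x + 1/x) F₀ F₁`, hence
`F₁ = B(1+B)/(1 + B(1 - x - 1/x))`, where `F₀ = 1 + B` and `B = t(1+B)²`. -/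
theorem F1_binary_equation (t : ℝ) (ht0 : 0 < t) (ht : t < 1/4)
    (x : ℂ) (hx : x ≠ 0) (F1 : ℂ)
    (hF1 : HasSum (fun T : BinTree => (t : ℂ)^T.size * T.labelSum x) F1) :
    (Bfun t : ℂ) = t * (1 + (Bfun t : ℂ))^2 ∧
    F1 = t * (1 + (Bfun t : ℂ))^2 + t * (x + x⁻¹) * (1 + (Bfun t : ℂ)) * F1 ∧
    F1 = (Bfun t : ℂ) * (1 + (Bfun t : ℂ)) /
      (1 + (Bfun t : ℂ) * (1 - x - x⁻¹)) := by
  have hBid : (Bfun t : ℂ) = t * (1 + (Bfun t : ℂ))^2 := by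
    exact_mod_cast congrArg (fun y : ℝ => (y : ℂ)) (Bfun_id ht0 ht)
  set f : BinTree → ℂ := fun T => (t : ℂ)^T.size * T.labelSum x with hf
  set gc : BinTree → ℂ := fun T => (t : ℂ)^T.size with hgc
  have hSreal := hasSum_pow_size ht0 ht
  set Sc : ℂ := (1 : ℂ) + (Bfun t : ℂ) with hScdef
  have hSc : HasSum gc Sc := by
    have h1 : HasSum (fun T : BinTree => ((t ^ T.size : ℝ) : ℂ)) ((1 + Bfun t : ℝ) : ℂ) :=
      Complex.ofRealCLM.hasSum hSreal
    have h2 : HasSum gc ((1 + Bfun t : ℝ) : ℂ) := h1.congr_fun (fun T => by push_cast; rfl)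
    simpa [hScdef] using h2
  -- norm summability
  have hgnorm : Summable (fun T : BinTree => ‖gc T‖) := by
    have : (fun T : BinTree => ‖gc T‖) = fun T : BinTree => t ^ T.size := by
      funext T
      simp [hgc, norm_pow, Complex.norm_real, _root_.abs_of_nonneg ht0.le]
    rw [this]
    exact hSreal.summable
  have hfnorm : Summable (fun T : BinTree => ‖f T‖) := summable_norm_iff.mpr hF1.summable
  -- products
  have hAs : Summable (fun p : BinTree × BinTree => gc p.1 * gc p.2) :=
    summable_mul_of_summable_norm hgnorm hgnorm
  have hA : HasSum (fun p : BinTree × BinTree => gc p.1 * gc p.2) (Sc * Sc) := by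
    have h := Summable.tsum_mul_tsum hSc.summable hSc.summable hAs
    rw [hSc.tsum_eq] at h
    exact h ▸ hAs.hasSum
  have hBs : Summable (fun p : BinTree × BinTree => f p.1 * gc p.2) :=
    summable_mul_of_summable_norm hfnorm hgnorm
  have hB : HasSum (fun p : BinTree × BinTree => f p.1 * gc p.2) (F1 * Sc) := by
    have h := Summable.tsum_mul_tsum hF1.summable hSc.summable hBs
    rw [hSc.tsum_eq, hF1.tsum_eq] at h
    exact h ▸ hBs.hasSum
  have hCs : Summable (fun p : BinTree × BinTree => gc p.1 * f p.2) :=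
    summable_mul_of_summable_norm hgnorm hfnorm
  have hC : HasSum (fun p : BinTree × BinTree => gc p.1 * f p.2) (Sc * F1) := by
    have h := Summable.tsum_mul_tsum hSc.summable hF1.summable hCs
    rw [hSc.tsum_eq, hF1.tsum_eq] at h
    exact h ▸ hCs.hasSum
  -- combine
  have hsum3 := ((hA.mul_left ((t : ℂ))).add (hB.mul_left ((t : ℂ) * x⁻¹))).add
    (hC.mul_left ((t : ℂ) * x))
  have hnode : HasSum (fun p : BinTree × BinTree => f (BinTree.node p.1 p.2))
      ((t : ℂ) * (Sc * Sc) + (t : ℂ) * x⁻¹ * (F1 * Sc) + (t : ℂ) * x * (Sc * F1)) := by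
    refine hsum3.congr_fun ?_
    intro p
    simp only [hf, hgc, BinTree.labelSum, BinTree.size, pow_add, pow_succ]
    ring
  have hF1' : HasSum f ((t : ℂ) * (Sc * Sc) + (t : ℂ) * x⁻¹ * (F1 * Sc) + (t : ℂ) * x * (Sc * F1)) :=
    (hasSum_nodes (by simp [hf, BinTree.labelSum])).mp hnode
  have key : F1 = (t : ℂ) * (Sc * Sc) + (t : ℂ) * x⁻¹ * (F1 * Sc) + (t : ℂ) * x * (Sc * F1) :=
    hF1.unique hF1'
  have hfe : F1 = t * (1 + (Bfun t : ℂ))^2 + t * (x + x⁻¹) * (1 + (Bfun t : ℂ)) * F1 := by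
    rw [hScdef] at key
    linear_combination key
  refine ⟨hBid, hfe, ?_⟩
  -- third conjunct
  have hBpos := Bfun_pos ht0 ht
  have hBne : (Bfun t : ℂ) ≠ 0 := by
    exact_mod_cast Complex.ofReal_ne_zero.mpr (ne_of_gt hBpos)
  have hBne1 : (1 : ℂ) + (Bfun t : ℂ) ≠ 0 := by
    have : ((1 + Bfun t : ℝ) : ℂ) ≠ 0 := Complex.ofReal_ne_zero.mpr (by positivity)
    push_cast at this
    exact this
  have hkey2 : F1 * (1 + (Bfun t : ℂ) * (1 - x - x⁻¹)) = (Bfun t : ℂ) * (1 + (Bfun t : ℂ)) := by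
    linear_combination (1 + (Bfun t : ℂ)) * hfe - ((x + x⁻¹) * F1 + 1 + (Bfun t : ℂ)) * hBid
  have hDne : (1 : ℂ) + (Bfun t : ℂ) * (1 - x - x⁻¹) ≠ 0 := by
    intro h
    rw [h, mul_zero] at hkey2
    exact (mul_ne_zero hBne hBne1) hkey2.symm
  rw [eq_div_iff hDne]
  exact hkey2
end

section
/- Let S_1 and S_2 be Polish spaces and phi : S_1 -> S_2 an injective continuous map. If (W_n) is a tight sequence of random elements of S_1 such that phi(W_n) converges in distribution in S_2 to some random element Z, then W_n converges in distribution in S_1 to some random element W with phi(W) equal in distribution to Z. -/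
open MeasureTheory Filter Topology
open scoped ENNReal NNReal

/-- Let `S₁`, `S₂` be Polish spaces and `φ : S₁ → S₂` injective and continuous. If `(W_n)`
is a tight sequence of random elements (laws `μ n`) of `S₁` such that `φ(W_n)` converges
in distribution to some `Z` (law `ν`), then `W_n` converges in distribution to some `W`
(law `μlim`) with `φ(W)` distributed as `Z`. -/
theorem tight_injective_image_convergence
    {S₁ S₂ : Type*}
    [TopologicalSpace S₁] [PolishSpace S₁] [MeasurableSpace S₁] [BorelSpace S₁]
    [TopologicalSpace S₂] [PolishSpace S₂] [MeasurableSpace S₂] [BorelSpace S₂]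
    (φ : S₁ → S₂) (hφc : Continuous φ) (hφi : Function.Injective φ)
    (μ : ℕ → ProbabilityMeasure S₁)
    (htight : ∀ ε : ENNReal, 0 < ε → ∃ K : Set S₁, IsCompact K ∧
      ∀ n, 1 - ε ≤ (μ n : Measure S₁) K)
    (ν : ProbabilityMeasure S₂)
    (hconv : Tendsto (fun n => (μ n).map hφc.measurable.aemeasurable) atTop (𝓝 ν)) :
    ∃ μlim : ProbabilityMeasure S₁,
      Tendsto μ atTop (𝓝 μlim) ∧ μlim.map hφc.measurable.aemeasurable = ν := by
  classical
  have hemb : MeasurableEmbedding φ := hφc.measurableEmbedding hφi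
  -- Key estimate: for closed `F`, compact `K` carrying mass `≥ 1 - ε` for each `μ n`,
  -- `limsup (μ n F) ≤ ν (φ '' (F ∩ K)) + ε`.
  have key : ∀ (F : Set S₁), IsClosed F → ∀ ε : ℝ≥0∞, ∀ K : Set S₁, IsCompact K →
      (∀ n, 1 - ε ≤ (μ n : Measure S₁) K) →
      atTop.limsup (fun n => (μ n : Measure S₁) F) ≤ (ν : Measure S₂) (φ '' (F ∩ K)) + ε := by
    intro F hF ε K hK hKn
    have hFK : IsCompact (F ∩ K) := hK.inter_left hF
    have hC : IsCompact (φ '' (F ∩ K)) := hFK.image hφc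
    have hCclosed : IsClosed (φ '' (F ∩ K)) := hC.isClosed
    have hCm : MeasurableSet (φ '' (F ∩ K)) := hCclosed.measurableSet
    have hKm : MeasurableSet K := hK.isClosed.measurableSet
    have step1 : ∀ n, (μ n : Measure S₁) F ≤
        (((μ n).map hφc.measurable.aemeasurable : ProbabilityMeasure S₂) :
          Measure S₂) (φ '' (F ∩ K)) + ε := by
      intro n
      have hcompl : (μ n : Measure S₁) Kᶜ ≤ ε := by
        have h1 : (μ n : Measure S₁) Kᶜ = 1 - (μ n : Measure S₁) K := by
          simpa only [measure_univ] using measure_compl hKm (measure_ne_top (μ n : Measure S₁) K)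
        rw [h1]
        refine tsub_le_iff_right.mpr ?_
        calc (1 : ℝ≥0∞) ≤ (1 - ε) + ε := le_tsub_add
          _ ≤ (μ n : Measure S₁) K + ε := add_le_add_left (hKn n) _
          _ = ε + (μ n : Measure S₁) K := add_comm _ _
      have h2 : (μ n : Measure S₁) F ≤ (μ n : Measure S₁) (F ∩ K) + ε := by
        calc (μ n : Measure S₁) F
            ≤ (μ n : Measure S₁) (F ∩ K) + (μ n : Measure S₁) (F \ K) :=
              measure_le_inter_add_diff _ _ _
          _ ≤ (μ n : Measure S₁) (F ∩ K) + (μ n : Measure S₁) Kᶜ :=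
              add_le_add_right (measure_mono fun x hx => hx.2) _
          _ ≤ (μ n : Measure S₁) (F ∩ K) + ε := add_le_add_right hcompl _
      refine h2.trans (add_le_add_left ?_ _)
      have hmap : (((μ n).map hφc.measurable.aemeasurable : ProbabilityMeasure S₂) :
          Measure S₂) (φ '' (F ∩ K)) = (μ n : Measure S₁) (φ ⁻¹' (φ '' (F ∩ K))) := by
        rw [ProbabilityMeasure.toMeasure_map, Measure.map_apply hφc.measurable hCm]
      rw [hmap]
      exact measure_mono (Set.subset_preimage_image _ _)
    calc atTop.limsup (fun n => (μ n : Measure S₁) F)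
        ≤ atTop.limsup (fun n =>
            (((μ n).map hφc.measurable.aemeasurable : ProbabilityMeasure S₂) :
              Measure S₂) (φ '' (F ∩ K)) + ε) :=
          limsup_le_limsup (Eventually.of_forall step1)
      _ = atTop.limsup (fun n =>
            (((μ n).map hφc.measurable.aemeasurable : ProbabilityMeasure S₂) :
              Measure S₂) (φ '' (F ∩ K))) + ε := by
          refine limsup_add_const atTop _ ε (isBoundedUnder_of ⟨1, fun n => prob_le_one⟩)
            (isBoundedUnder_of (r := (· ≥ ·)) ⟨0, fun n => zero_le⟩).isCoboundedUnder_le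
      _ ≤ (ν : Measure S₂) (φ '' (F ∩ K)) + ε := by
          exact add_le_add_left
            (ProbabilityMeasure.limsup_measure_closed_le_of_tendsto hconv hCclosed) _
  -- The limit `ν` is carried by the (Borel) range of `φ`.
  have hν_range : (ν : Measure S₂) (Set.range φ) = 1 := by
    refine le_antisymm prob_le_one ?_
    refine ENNReal.le_of_forall_pos_le_add fun ε hε _ => ?_
    obtain ⟨K, hK, hKn⟩ := htight ε (by exact_mod_cast hε)
    have h := key Set.univ isClosed_univ ε K hK hKn
    have hlim : atTop.limsup (fun n => (μ n : Measure S₁) Set.univ) = 1 := by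
      simp [measure_univ]
    rw [hlim] at h
    refine h.trans (add_le_add_left (measure_mono ?_) _)
    exact Set.image_subset_range _ _
  have hrange_m : MeasurableSet (Set.range φ) := hemb.measurableSet_range
  have hae : ∀ᵐ x ∂(ν : Measure S₂), x ∈ Set.range φ := by
    have : (ν : Measure S₂) (Set.range φ)ᶜ = 0 := by
      have h1 : (ν : Measure S₂) (Set.range φ)ᶜ = 1 - (ν : Measure S₂) (Set.range φ) := by
        simpa only [measure_univ] using measure_compl hrange_m (measure_ne_top (ν : Measure S₂) _)
      rw [h1, hν_range, tsub_self]
    exact this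
  -- Define the limit law by pulling `ν` back along the measurable embedding `φ`.
  set m : Measure S₁ := (ν : Measure S₂).comap φ with hm
  have hmapm : m.map φ = (ν : Measure S₂) := by
    rw [hm, hemb.map_comap, Measure.restrict_eq_self_of_ae_mem hae]
  have hprob : IsProbabilityMeasure m := by
    constructor
    rw [hm, hemb.comap_apply, Set.image_univ, hν_range]
  set μlim : ProbabilityMeasure S₁ := ⟨m, hprob⟩ with hμlim
  -- The closed-set limsup criterion against `μlim`.
  have hclosed : ∀ F : Set S₁, IsClosed F →
      atTop.limsup (fun n => (μ n : Measure S₁) F) ≤ m F := by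
    intro F hF
    refine ENNReal.le_of_forall_pos_le_add fun ε hε _ => ?_
    obtain ⟨K, hK, hKn⟩ := htight ε (by exact_mod_cast hε)
    refine (key F hF ε K hK hKn).trans (add_le_add_left ?_ _)
    rw [hm, ← hemb.comap_apply]
    exact measure_mono Set.inter_subset_left
  refine ⟨μlim, ?_, ?_⟩
  · -- weak convergence via the open-set liminf criterion
    apply MeasureTheory.tendsto_of_forall_isOpen_le_liminf
    intro G hG
    have hE : (μlim : Measure S₁) G ≤ atTop.liminf (fun n => (μ n : Measure S₁) G) := by
      refine le_measure_liminf_of_limsup_measure_compl_le hG.measurableSet ?_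
      exact hclosed Gᶜ hG.isClosed_compl
    -- translate from `ℝ≥0∞` to `ℝ≥0`
    have aux : (ENNReal.ofNNReal (atTop.liminf fun n => μ n G)) =
        atTop.liminf (fun n => ((μ n G : ℝ≥0) : ℝ≥0∞)) := by
      refine Monotone.map_liminf_of_continuousAt (F := atTop) ENNReal.coe_mono (fun n => μ n G)
        ?_ ?_ ?_
      · exact ENNReal.continuous_coe.continuousAt
      · exact (isBoundedUnder_of ⟨1, fun n => (μ n).apply_le_one G⟩).isCoboundedUnder_ge
      · exact isBoundedUnder_of (r := (· ≥ ·)) ⟨0, fun n => zero_le⟩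
    rw [← ENNReal.coe_le_coe, aux]
    simpa only [ProbabilityMeasure.ennreal_coeFn_eq_coeFn_toMeasure] using hE
  · -- identification of the pushforward
    apply ProbabilityMeasure.toMeasure_injective
    rw [ProbabilityMeasure.toMeasure_map]
    exact hmapm
end
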